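/- For every graph G, a(G*) ≥ a(G), where G* is the double graph of G. -/

import Mathlib

open SimpleGraph

/-- The total domination number of a graph. -/
noncomputable def totalDominationNumber {V : Type*} (G : SimpleGraph V) : ℕ :=
  sInf {k | ∃ D : Finset V, (∀ v : V, ∃ u ∈ D, G.Adj v u) ∧ D.card = k}

/-- The annihilation number of a graph. -/
noncomputable def annihilationNumber {V : Type*} (G : SimpleGraph V) : ℕ :=
  sSup {k | ∃ S : Finset V, S.card = k ∧ ∑ v ∈ S, (G.neighborSet v).ncard ≤ G.edgeSet.ncard}

/-- The double graph `G*` of `G`: two disjoint copies `G₁, G₂` of `G` (the copy of `u`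
in `Gᵢ` being `(u, i)`), where for each edge `uv` of `G` the edges `u₁v₂` and `u₂v₁`
are added; equivalently, `(u, i)` and `(v, j)` are adjacent iff `uv ∈ E(G)`. -/
def doubleGraph {V : Type*} (G : SimpleGraph V) : SimpleGraph (V × Fin 2) where
  Adj a b := G.Adj a.1 b.1
  symm := ⟨fun _ _ h => G.adj_symm h⟩
  loopless := ⟨fun a h => G.irrefl (v := a.1) h⟩

section aux
variable {V : Type*} [Fintype V] (G : SimpleGraph V)

lemma double_neighbor (p : V × Fin 2) :
    (doubleGraph G).neighborSet p = (G.neighborSet p.1) ×ˢ (Set.univ : Set (Fin 2)) := by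
  ext ⟨u, i⟩
  simp [doubleGraph, SimpleGraph.neighborSet, Set.mem_prod, adj_comm]

lemma double_neighbor_ncard (p : V × Fin 2) :
    ((doubleGraph G).neighborSet p).ncard = 2 * (G.neighborSet p.1).ncard := by
  classical
  rw [double_neighbor, Set.ncard_eq_toFinset_card', Set.ncard_eq_toFinset_card',
    Set.toFinset_prod, Finset.card_product]
  simp [mul_comm]

lemma double_edge_ncard :
    (doubleGraph G).edgeSet.ncard = 4 * G.edgeSet.ncard := by
  classical
  have h1 : ∑ p : V × Fin 2, (doubleGraph G).degree p = 2 * (doubleGraph G).edgeFinset.card :=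
    SimpleGraph.sum_degrees_eq_twice_card_edges _
  have h2 : ∑ v : V, G.degree v = 2 * G.edgeFinset.card :=
    SimpleGraph.sum_degrees_eq_twice_card_edges _
  have hdeg : ∀ p : V × Fin 2, (doubleGraph G).degree p = 2 * G.degree p.1 := by
    intro p
    rw [← SimpleGraph.card_neighborSet_eq_degree, ← SimpleGraph.card_neighborSet_eq_degree,
      ← Nat.card_eq_fintype_card, ← Nat.card_eq_fintype_card,
      Nat.card_coe_set_eq, Nat.card_coe_set_eq]
    exact double_neighbor_ncard G p
  have hsum : ∑ p : V × Fin 2, (doubleGraph G).degree p = 4 * ∑ v : V, G.degree v := by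
    rw [← Finset.univ_product_univ, Finset.sum_product, Finset.mul_sum]
    refine Finset.sum_congr rfl fun v _ => ?_
    simp only [hdeg]
    simp [Finset.sum_const]
    ring
  rw [hsum, h2] at h1
  rw [Set.ncard_eq_toFinset_card', Set.ncard_eq_toFinset_card']
  have e1 : (doubleGraph G).edgeSet.toFinset = (doubleGraph G).edgeFinset := rfl
  have e2 : G.edgeSet.toFinset = G.edgeFinset := rfl
  rw [e1, e2]
  omega
end aux

/-- For every (finite) graph `G`, `a(G*) ≥ a(G)`. -/
theorem stmt_15 {V : Type*} [Fintype V] (G : SimpleGraph V) :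
    annihilationNumber G ≤ annihilationNumber (doubleGraph G) := by
  classical
  unfold annihilationNumber
  apply csSup_le_csSup
  · refine ⟨Fintype.card (V × Fin 2), ?_⟩
    rintro k ⟨S, rfl, -⟩
    simpa using Finset.card_le_univ S
  · exact ⟨0, ∅, by simp, by simp⟩
  · rintro k ⟨S, rfl, hS⟩
    have hinj : Function.Injective (fun v : V => (v, (0 : Fin 2))) :=
      fun a b h => congrArg Prod.fst h
    refine ⟨S.image (fun v => (v, (0 : Fin 2))), Finset.card_image_of_injective _ hinj, ?_⟩
    rw [Finset.sum_image (fun a _ b _ h => hinj h), double_edge_ncard]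
    have hc : ∀ v ∈ S, ((doubleGraph G).neighborSet (v, (0:Fin 2))).ncard
        = 2 * (G.neighborSet v).ncard := fun v _ => double_neighbor_ncard G (v, 0)
    rw [Finset.sum_congr rfl hc, ← Finset.mul_sum]
    omega
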